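/- Let n be a positive integer, d ≥ 1 an integer, L ≥ 0 and I > 0 real numbers, x and s real numbers, and a_0, …, a_d real coefficients with |a_v| ≤ 2^{3.5d+1} · L · I for every 1 ≤ v ≤ d. Suppose that |h_{l,x}(s − 1)| ≤ (2I)^l for every 0 ≤ l ≤ d−1. Then |Σ_{v=0}^{d} a_v I^{−v} (h_{v,x}(s) − h_{v,x}(s−1))| ≤ (d · 2^{4.5d+1} / n) · L. -/

import Mathlib

open scoped BigOperators

/-- `h_{v,x}(y) = Σ_{l=0}^{v} binom(v,l) (-x)^{v-l} Π_{l'=0}^{l-1} ((y - l')/n)`. -/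
noncomputable def hfun (n : ℕ) (x : ℝ) (v : ℕ) (y : ℝ) : ℝ :=
  ∑ l ∈ Finset.range (v + 1), (v.choose l : ℝ) * (-x) ^ (v - l) *
    ∏ l' ∈ Finset.range l, ((y - l') / n)

lemma prod_diff (s : ℝ) (l : ℕ) :
    (∏ l' ∈ Finset.range (l+1), (s - (l' : ℝ))) - ∏ l' ∈ Finset.range (l+1), (s - 1 - (l' : ℝ))
    = ((l : ℝ)+1) * ∏ l' ∈ Finset.range l, (s - 1 - (l' : ℝ)) := by
  induction l with
  | zero => simp
  | succ l ih =>
    rw [Finset.prod_range_succ (fun l' : ℕ => s - (l' : ℝ)) (l+1),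
        Finset.prod_range_succ (fun l' : ℕ => s - 1 - (l' : ℝ)) (l+1),
        Finset.prod_range_succ (fun l' : ℕ => s - 1 - (l' : ℝ)) l]
    rw [Finset.prod_range_succ (fun l' : ℕ => s - 1 - (l' : ℝ)) l] at ih
    push_cast at ih ⊢
    linear_combination (s - (l : ℝ) - 1) * ih

lemma prod_diff' (n : ℕ) (hn : 0 < n) (s : ℝ) (l : ℕ) :
    (∏ l' ∈ Finset.range (l+1), ((s - (l' : ℝ))/n)) - ∏ l' ∈ Finset.range (l+1), ((s - 1 - (l' : ℝ))/n)
    = ((l : ℝ)+1)/n * ∏ l' ∈ Finset.range l, ((s - 1 - (l' : ℝ))/n) := by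
  have hn' : (n : ℝ) ≠ 0 := Nat.cast_ne_zero.2 hn.ne'
  simp only [Finset.prod_div_distrib, Finset.prod_const, Finset.card_range]
  rw [div_sub_div_same, prod_diff, pow_succ]
  field_simp

lemma hfun_diff (n : ℕ) (hn : 0 < n) (x s : ℝ) (w : ℕ) :
    hfun n x (w+1) s - hfun n x (w+1) (s-1) = ((w:ℝ)+1)/n * hfun n x w (s-1) := by
  have hn' : (n : ℝ) ≠ 0 := Nat.cast_ne_zero.2 hn.ne'
  unfold hfun
  rw [← Finset.sum_sub_distrib, Finset.sum_range_succ', Finset.mul_sum]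
  simp only [Finset.range_zero, Finset.prod_empty, sub_self, mul_zero]
  rw [add_zero]
  apply Finset.sum_congr rfl
  intro l hl
  have hch : ((w+1).choose (l+1) : ℝ) * ((l:ℝ)+1) = ((w:ℝ)+1) * (w.choose l : ℝ) := by
    have h := Nat.add_one_mul_choose_eq w l
    have h2 : ((w+1) * w.choose l : ℕ) = ((w+1).choose (l+1) * (l+1) : ℕ) := h
    exact_mod_cast (by exact_mod_cast h2.symm)
  have hvl : w + 1 - (l + 1) = w - l := by omega
  rw [hvl]
  have hpd := prod_diff' n hn s l
  have hsub : ∀ l' : ℕ, s - 1 - (l' : ℝ) = (s - 1) - (l' : ℝ) := fun _ => by ring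
  linear_combination (((w+1).choose (l+1) : ℝ) * (-x)^(w-l)) * hpd
    + ((-x)^(w-l) * (∏ l' ∈ Finset.range l, ((s - 1 - (l':ℝ))/n)) / n) * hch

lemma sum_v2 (d : ℕ) : ∑ v ∈ Finset.range (d+1), (v:ℝ) * 2^(v-1) ≤ (d:ℝ) * 2^d := by
  induction d with
  | zero => simp
  | succ d ih =>
    rw [Finset.sum_range_succ, Nat.add_sub_cancel]
    push_cast
    have h2 : (0:ℝ) ≤ 2^d := by positivity
    have hp : (2:ℝ)^(d+1) = 2 * 2^d := by rw [pow_succ]; ring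
    nlinarith [ih]

/-- Type-1 difference bound: if `|a_v| ≤ 2^{3.5d+1} L I` for `1 ≤ v ≤ d` and
`|h_{l,x}(s-1)| ≤ (2I)^l` for `0 ≤ l ≤ d-1`, then
`|Σ_{v=0}^{d} a_v I^{-v} (h_{v,x}(s) - h_{v,x}(s-1))| ≤ (d 2^{4.5d+1}/n) L`. -/
theorem type1_difference_bound (n : ℕ) (hn : 0 < n) (d : ℕ) (hd : 1 ≤ d)
    (L I : ℝ) (hL : 0 ≤ L) (hI : 0 < I) (x s : ℝ) (a : ℕ → ℝ)
    (ha : ∀ v, 1 ≤ v → v ≤ d → |a v| ≤ 2 ^ ((7 * (d : ℝ) + 2) / 2) * L * I)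
    (hh : ∀ l, l ≤ d - 1 → |hfun n x l (s - 1)| ≤ (2 * I) ^ l) :
    |∑ v ∈ Finset.range (d + 1), a v / I ^ v * (hfun n x v s - hfun n x v (s - 1))|
      ≤ ((d : ℝ) * 2 ^ ((9 * (d : ℝ) + 2) / 2) / n) * L := by
  have hn' : (0:ℝ) < n := by exact_mod_cast hn
  have hI0 : I ≠ 0 := ne_of_gt hI
  set C : ℝ := 2 ^ ((7 * (d : ℝ) + 2) / 2) with hC
  have hCpos : 0 < C := Real.rpow_pos_of_pos (by norm_num) _
  have key : ∀ v ∈ Finset.range (d+1),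
      |a v / I ^ v * (hfun n x v s - hfun n x v (s-1))| ≤ (C * L / n) * ((v:ℝ) * 2^(v-1)) := by
    intro v hv
    rw [Finset.mem_range] at hv
    match v with
    | 0 => simp [hfun]
    | (w+1) =>
      have hvd : w + 1 ≤ d := Nat.lt_succ_iff.mp hv
      have hwd : w ≤ d - 1 := by omega
      rw [hfun_diff n hn x s w]
      have h1 : |a (w+1)| ≤ C * L * I := ha _ (Nat.succ_le_succ (Nat.zero_le w)) hvd
      have h2 : |hfun n x w (s-1)| ≤ (2*I)^w := hh w hwd
      have step : |a (w+1) / I ^ (w+1) * (((w:ℝ)+1)/n * hfun n x w (s-1))|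
          ≤ (C*L*I)/I^(w+1) * (((w:ℝ)+1)/n * (2*I)^w) := by
        rw [abs_mul, abs_mul, abs_div, abs_pow, abs_of_pos hI,
            abs_of_nonneg (show (0:ℝ) ≤ ((w:ℝ)+1)/n by positivity)]
        gcongr
      refine step.trans (le_of_eq ?_)
      rw [Nat.add_sub_cancel, mul_pow]
      push_cast
      field_simp
      ring
  calc |∑ v ∈ Finset.range (d + 1), a v / I ^ v * (hfun n x v s - hfun n x v (s - 1))|
      ≤ ∑ v ∈ Finset.range (d+1), |a v / I ^ v * (hfun n x v s - hfun n x v (s-1))| :=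
        Finset.abs_sum_le_sum_abs _ _
    _ ≤ ∑ v ∈ Finset.range (d+1), (C * L / n) * ((v:ℝ) * 2^(v-1)) :=
        Finset.sum_le_sum key
    _ = (C * L / n) * ∑ v ∈ Finset.range (d+1), (v:ℝ) * 2^(v-1) := by
        rw [Finset.mul_sum]
    _ ≤ (C * L / n) * ((d:ℝ) * 2^d) := by
        apply mul_le_mul_of_nonneg_left (sum_v2 d) (by positivity)
    _ = ((d : ℝ) * 2 ^ ((9 * (d : ℝ) + 2) / 2) / n) * L := by
        have h2d : (2:ℝ)^d = (2:ℝ) ^ ((d:ℝ)) := (Real.rpow_natCast 2 d).symm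
        have hCE : C * (2:ℝ)^d = 2 ^ ((9 * (d : ℝ) + 2) / 2) := by
          rw [h2d, hC, ← Real.rpow_add (by norm_num : (0:ℝ) < 2)]
          congr 1
          ring
        rw [← hCE]
        ring
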